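/- arXiv:1312.3421 — 2 statements merged into one kernel-verified Lean document; each statement's English description precedes it below -/
import Mathlib

section
/- Thompson's group F is not virtually abelian. -/
namespace ThompsonAux
/-- The free generator `x₀`. -/
def a : FreeGroup (Fin 2) := FreeGroup.of 0
/-- The free generator `x₁`. -/
def b : FreeGroup (Fin 2) := FreeGroup.of 1
end ThompsonAux

open scoped commutatorElement

/-- Relators `[x₀x₁⁻¹, x₀⁻¹x₁x₀]` and `[x₀x₁⁻¹, x₀⁻²x₁x₀²]` of the standard finite
presentation of Thompson's group `F`. -/
def thompsonRels : Set (FreeGroup (Fin 2)) :=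
  { ⁅ThompsonAux.a * ThompsonAux.b⁻¹, ThompsonAux.a⁻¹ * ThompsonAux.b * ThompsonAux.a⁆,
    ⁅ThompsonAux.a * ThompsonAux.b⁻¹, ThompsonAux.a⁻¹ ^ 2 * ThompsonAux.b * ThompsonAux.a ^ 2⁆ }

/-- Thompson's group `F`, via its standard finite presentation. -/
def ThompsonF := PresentedGroup thompsonRels

instance : Group ThompsonF := by unfold ThompsonF; infer_instance

/-- The generators `x₀, x₁` of Thompson's group `F`. -/
def ThompsonF.x (i : Fin 2) : ThompsonF := PresentedGroup.of i


noncomputable section VA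

/-- translation by -1 -/
def Tperm : Equiv.Perm ℝ :=
  ⟨fun t => t - 1, fun t => t + 1, fun t => by ring, fun t => by ring⟩

/-- PL map: inverse of the standard x₁ of Thompson's F on the line -/
def Pperm : Equiv.Perm ℝ :=
  ⟨fun t => if t ≤ 0 then t else if t ≤ 2 then t / 2 else t - 1,
   fun t => if t ≤ 0 then t else if t ≤ 1 then 2 * t else t + 1,
   fun t => by dsimp only; split_ifs <;> linarith,
   fun t => by dsimp only; split_ifs <;> linarith⟩

end VA



lemma Tperm_apply (t : ℝ) : Tperm t = t - 1 := rfl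
lemma Tperm_inv_apply (t : ℝ) : Tperm⁻¹ t = t + 1 := rfl
lemma Pperm_apply (t : ℝ) :
    Pperm t = if t ≤ 0 then t else if t ≤ 2 then t / 2 else t - 1 := rfl
lemma Pperm_inv_apply (t : ℝ) :
    Pperm⁻¹ t = if t ≤ 0 then t else if t ≤ 1 then 2 * t else t + 1 := rfl

lemma hu (t : ℝ) : (Tperm * Pperm⁻¹) t = if t ≤ 0 then t - 1 else if t ≤ 1 then 2*t - 1 else t := by
  simp only [Equiv.Perm.mul_apply, Tperm_apply, Pperm_inv_apply]
  split_ifs <;> linarith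

lemma hv (t : ℝ) : (Tperm⁻¹ * Pperm * Tperm) t =
    if t ≤ 1 then t else if t ≤ 3 then (t+1)/2 else t - 1 := by
  simp only [Equiv.Perm.mul_apply, Tperm_apply, Tperm_inv_apply, Pperm_apply]
  split_ifs <;> linarith

lemma hv2 (t : ℝ) : (Tperm⁻¹ ^ 2 * Pperm * Tperm ^ 2) t =
    if t ≤ 2 then t else if t ≤ 4 then (t+2)/2 else t - 1 := by
  simp only [pow_two, Equiv.Perm.mul_apply, Tperm_apply, Tperm_inv_apply, Pperm_apply]
  split_ifs <;> linarith

lemma comm1 : Commute (Tperm * Pperm⁻¹) (Tperm⁻¹ * Pperm * Tperm) := by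
  apply Equiv.ext
  intro t
  show (Tperm * Pperm⁻¹) ((Tperm⁻¹ * Pperm * Tperm) t) =
    (Tperm⁻¹ * Pperm * Tperm) ((Tperm * Pperm⁻¹) t)
  rw [hv t, hu t, hu, hv]
  split_ifs <;> linarith

lemma comm2 : Commute (Tperm * Pperm⁻¹) (Tperm⁻¹ ^ 2 * Pperm * Tperm ^ 2) := by
  apply Equiv.ext
  intro t
  show (Tperm * Pperm⁻¹) ((Tperm⁻¹ ^ 2 * Pperm * Tperm ^ 2) t) =
    (Tperm⁻¹ ^ 2 * Pperm * Tperm ^ 2) ((Tperm * Pperm⁻¹) t)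
  rw [hv2 t, hu t, hu, hv2]
  split_ifs <;> linarith

lemma hrels : ∀ r ∈ thompsonRels, FreeGroup.lift ![Tperm, Pperm] r = 1 := by
  intro r hr
  simp only [thompsonRels, Set.mem_insert_iff, Set.mem_singleton_iff] at hr
  rcases hr with rfl | rfl <;>
    · rw [map_commutatorElement]
      simp only [ThompsonAux.a, ThompsonAux.b, map_mul, map_inv, map_pow, FreeGroup.lift_apply_of,
        Matrix.cons_val_zero, Matrix.cons_val_one, Matrix.head_cons]
      first
        | exact commutatorElement_eq_one_iff_commute.mpr comm1
        | exact commutatorElement_eq_one_iff_commute.mpr comm2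

noncomputable def φ : ThompsonF →* Equiv.Perm ℝ := PresentedGroup.toGroup hrels

lemma φ_x0 : φ (ThompsonF.x 0) = Tperm := PresentedGroup.toGroup.of hrels
lemma φ_x1 : φ (ThompsonF.x 1) = Pperm := PresentedGroup.toGroup.of hrels

lemma Tpow (k : ℕ) (t : ℝ) : (Tperm ^ k) t = t - k := by
  induction k generalizing t with
  | zero => simp
  | succ k ih =>
    rw [pow_succ, Equiv.Perm.mul_apply, Tperm_apply, ih]
    push_cast; ring

lemma Ppow_nonpos (k : ℕ) (t : ℝ) (ht : t ≤ 0) : (Pperm ^ k) t = t := by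
  induction k generalizing t with
  | zero => simp
  | succ k ih =>
    rw [pow_succ, Equiv.Perm.mul_apply, Pperm_apply, if_pos ht, ih t ht]

lemma Ppow_small (k : ℕ) (t : ℝ) (h0 : 0 < t) (h1 : t ≤ 1) :
    (Pperm ^ k) t = t / 2 ^ k := by
  induction k generalizing t with
  | zero => simp
  | succ k ih =>
    rw [pow_succ, Equiv.Perm.mul_apply, Pperm_apply, if_neg (by linarith), if_pos (by linarith),
      ih (t / 2) (by linarith) (by linarith)]
    rw [pow_succ]; ring

/-- Thompson's group `F` is not virtually abelian: it has no abelian subgroup of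
finite index. -/
theorem thompsonF_not_virtually_abelian :
    ¬ ∃ H : Subgroup ThompsonF, H.FiniteIndex ∧ IsMulCommutative H := by
  rintro ⟨H, hfi, hcomm⟩
  haveI := hfi; haveI := hcomm
  haveI : H.normalCore.Normal := H.normalCore_normal
  haveI : H.normalCore.FiniteIndex := Subgroup.finiteIndex_normalCore H
  set n := H.normalCore.index with hn
  have hn0 : n ≠ 0 := Subgroup.FiniteIndex.index_ne_zero
  have h0 : (ThompsonF.x 0) ^ n ∈ H.normalCore := Subgroup.pow_index_mem _ _
  have h1 : (ThompsonF.x 1) ^ n ∈ H.normalCore := Subgroup.pow_index_mem _ _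
  have hcom : (ThompsonF.x 0) ^ n * (ThompsonF.x 1) ^ n
      = (ThompsonF.x 1) ^ n * (ThompsonF.x 0) ^ n :=
    Subgroup.mul_comm_of_mem_isMulCommutative H (H.normalCore_le h0) (H.normalCore_le h1)
  have hφ : Tperm ^ n * Pperm ^ n = Pperm ^ n * Tperm ^ n := by
    have := congrArg φ hcom
    simpa only [map_mul, map_pow, φ_x0, φ_x1] using this
  have hev := congrFun (congrArg (fun (σ : Equiv.Perm ℝ) => (σ : ℝ → ℝ)) hφ) (1/2 : ℝ)
  simp only [Equiv.Perm.coe_mul, Function.comp_apply] at hev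
  have hn1 : (1 : ℝ) ≤ n := by
    have : 1 ≤ n := Nat.one_le_iff_ne_zero.mpr hn0
    exact_mod_cast this
  have hL : (Tperm ^ n) ((Pperm ^ n) (1/2 : ℝ)) = 1 / 2 / 2 ^ n - n := by
    rw [Ppow_small n (1/2) (by norm_num) (by norm_num), Tpow]
  have hR : (Pperm ^ n) ((Tperm ^ n) (1/2 : ℝ)) = 1 / 2 - n := by
    rw [Tpow, Ppow_nonpos n _ (by linarith)]
  rw [hL, hR] at hev
  have hpow : (1 : ℝ) < 2 ^ n := one_lt_pow₀ one_lt_two hn0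
  have h2 : (1:ℝ) / 2 / 2 ^ n < 1 / 2 := by
    rw [div_lt_iff₀ (by positivity)] at *
    nlinarith
  linarith
end

section
/- Every finite-index subgroup of Thompson's group F has abelianization isomorphic to ℤ²; equivalently, the virtual first Betti number of F equals 2. -/
open scoped commutatorElement

section GenericGroup

variable {Q : Type*} [Group Q]

/-- `XX A B n = A⁻ⁿ B Aⁿ`. -/
def XX (A B : Q) : ℕ → Q := fun n => A⁻¹ ^ n * B * A ^ n

lemma XX_succ (A B : Q) (n : ℕ) : XX A B (n + 1) = A⁻¹ * XX A B n * A := by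
  simp only [XX, pow_succ, pow_succ']
  group

lemma XX_zero (A B : Q) : XX A B 0 = B := by simp [XX]

lemma XX_one (A B : Q) : XX A B 1 = A⁻¹ * B * A := by simp [XX]

lemma XX_two (A B : Q) : XX A B 2 = A⁻¹ ^ 2 * B * A ^ 2 := rfl

variable {A B : Q}

lemma S_one (h1 : ⁅A * B⁻¹, A⁻¹ * B * A⁆ = 1) :
    B⁻¹ * XX A B 1 * B = XX A B 2 := by
  have c1 : (A * B⁻¹) * (A⁻¹ * B * A) = (A⁻¹ * B * A) * (A * B⁻¹) :=
    (commutatorElement_eq_one_iff_commute.mp h1).eq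
  rw [XX_one, XX_two]
  calc B⁻¹ * (A⁻¹ * B * A) * B
      = A⁻¹ * ((A * B⁻¹) * (A⁻¹ * B * A)) * B := by group
    _ = A⁻¹ * ((A⁻¹ * B * A) * (A * B⁻¹)) * B := by rw [c1]
    _ = A⁻¹ ^ 2 * B * A ^ 2 := by group; rw [mul_assoc, ← pow_two]; group

lemma S_two (h2 : ⁅A * B⁻¹, A⁻¹ ^ 2 * B * A ^ 2⁆ = 1) :
    B⁻¹ * XX A B 2 * B = XX A B 3 := by
  have c2 : (A * B⁻¹) * (A⁻¹ ^ 2 * B * A ^ 2) = (A⁻¹ ^ 2 * B * A ^ 2) * (A * B⁻¹) :=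
    (commutatorElement_eq_one_iff_commute.mp h2).eq
  have h3 : XX A B 3 = A⁻¹ ^ 3 * B * A ^ 3 := rfl
  rw [XX_two, h3]
  calc B⁻¹ * (A⁻¹ ^ 2 * B * A ^ 2) * B
      = A⁻¹ * ((A * B⁻¹) * (A⁻¹ ^ 2 * B * A ^ 2)) * B := by group
    _ = A⁻¹ * ((A⁻¹ ^ 2 * B * A ^ 2) * (A * B⁻¹)) * B := by rw [c2]
    _ = A⁻¹ ^ 3 * B * A ^ 3 := by group

lemma T_step {k : ℕ} (hk : B⁻¹ * XX A B k * B = XX A B (k + 1)) :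
    (XX A B 1)⁻¹ * XX A B (k + 1) * XX A B 1 = XX A B (k + 2) := by
  calc (XX A B 1)⁻¹ * XX A B (k + 1) * XX A B 1
      = (A⁻¹ * B * A)⁻¹ * (A⁻¹ * XX A B k * A) * (A⁻¹ * B * A) := by
        rw [XX_one, XX_succ]
    _ = A⁻¹ * (B⁻¹ * XX A B k * B) * A := by group
    _ = A⁻¹ * XX A B (k + 1) * A := by rw [hk]
    _ = XX A B (k + 2) := (XX_succ A B (k + 1)).symm

lemma S_all (h1 : ⁅A * B⁻¹, A⁻¹ * B * A⁆ = 1) (h2 : ⁅A * B⁻¹, A⁻¹ ^ 2 * B * A ^ 2⁆ = 1) :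
    ∀ n : ℕ, B⁻¹ * XX A B (n + 1) * B = XX A B (n + 2) := by
  have key : ∀ n : ℕ, (B⁻¹ * XX A B (n + 1) * B = XX A B (n + 2)) ∧
      (B⁻¹ * XX A B (n + 2) * B = XX A B (n + 3)) := by
    intro n
    induction n with
    | zero => exact ⟨S_one h1, S_two h2⟩
    | succ m ih =>
      obtain ⟨ihm, ihm1⟩ := ih
      refine ⟨ihm1, ?_⟩
      have hT : (XX A B 1)⁻¹ * XX A B (m + 2) * XX A B 1 = XX A B (m + 3) := T_step ihm
      have hS1 : B⁻¹ * XX A B 1 * B = XX A B 2 := S_one h1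
      calc B⁻¹ * XX A B (m + 3) * B
          = (B⁻¹ * XX A B 1 * B)⁻¹ * (B⁻¹ * XX A B (m + 2) * B) * (B⁻¹ * XX A B 1 * B) := by
            rw [← hT]; group
        _ = (XX A B 2)⁻¹ * XX A B (m + 3) * XX A B 2 := by rw [hS1, ihm1]
        _ = (A⁻¹ * XX A B 1 * A)⁻¹ * (A⁻¹ * XX A B (m + 2) * A) * (A⁻¹ * XX A B 1 * A) := by
            rw [← XX_succ A B 1, ← XX_succ A B (m + 2)]
        _ = A⁻¹ * ((XX A B 1)⁻¹ * XX A B (m + 2) * XX A B 1) * A := by group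
        _ = A⁻¹ * XX A B (m + 3) * A := by rw [hT]
        _ = XX A B (m + 4) := (XX_succ A B (m + 3)).symm
  exact fun n => (key n).1

lemma commute_of_pow_eq_one (h1 : ⁅A * B⁻¹, A⁻¹ * B * A⁆ = 1)
    (h2 : ⁅A * B⁻¹, A⁻¹ ^ 2 * B * A ^ 2⁆ = 1) {m : ℕ} (hA : A ^ (m + 1) = 1) :
    Commute A B := by
  have hXm : XX A B (m + 1) = B := by
    simp [XX, inv_pow, hA]
  have hS := S_all h1 h2 m
  rw [hXm] at hS
  have : B = A⁻¹ * B * A := by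
    have h2' : XX A B (m + 2) = A⁻¹ * B * A := by rw [XX_succ, hXm]
    rw [h2'] at hS
    simpa using hS
  have : A * B = B * A := by
    conv_lhs => rw [this]
    group
  exact this

end GenericGroup

namespace ThompsonProof

open Subgroup

abbrev aT : ThompsonF := ThompsonF.x 0
abbrev bT : ThompsonF := ThompsonF.x 1

lemma mk_rel_eq_one {r : FreeGroup (Fin 2)} (h : r ∈ thompsonRels) :
    PresentedGroup.mk thompsonRels r = (1 : ThompsonF) :=
  (QuotientGroup.eq_one_iff r).mpr (Subgroup.subset_normalClosure h)

lemma rel1 : ⁅aT * bT⁻¹, aT⁻¹ * bT * aT⁆ = (1 : ThompsonF) := by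
  have h := mk_rel_eq_one (Set.mem_insert _ _)
  simp only [ThompsonAux.a, ThompsonAux.b, map_commutatorElement, map_mul, map_inv] at h
  exact h

lemma rel2 : ⁅aT * bT⁻¹, aT⁻¹ ^ 2 * bT * aT ^ 2⁆ = (1 : ThompsonF) := by
  have h := mk_rel_eq_one (Set.mem_insert_of_mem _ rfl)
  simp only [ThompsonAux.a, ThompsonAux.b, map_commutatorElement, map_mul, map_inv,
    map_pow] at h
  exact h

lemma hgen : Subgroup.closure ({aT, bT} : Set ThompsonF) = ⊤ := by
  rw [Subgroup.eq_top_iff']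
  intro x
  refine PresentedGroup.generated_by thompsonRels _ ?_ x
  intro j
  fin_cases j
  · exact Subgroup.subset_closure (Set.mem_insert _ _)
  · exact Subgroup.subset_closure (Set.mem_insert_of_mem _ rfl)

/-- If the images of the two generators commute, the whole commutator subgroup dies. -/
lemma commutator_le_ker {Q : Type*} [Group Q] (π : ThompsonF →* Q)
    (hc : Commute (π aT) (π bT)) : commutator ThompsonF ≤ π.ker := by
  have h1 : ∀ g : ThompsonF, π g ∈ Subgroup.centralizer {π aT, π bT} := by
    have hle : (⊤ : Subgroup ThompsonF) ≤
        Subgroup.comap π (Subgroup.centralizer {π aT, π bT}) := by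
      rw [← hgen]
      refine (Subgroup.closure_le _).mpr ?_
      rintro y (rfl | rfl) <;>
        · refine Subgroup.mem_comap.mpr (Subgroup.mem_centralizer_iff.mpr ?_)
          rintro z (rfl | rfl)
          all_goals first | rfl | exact hc.eq | exact hc.symm.eq
    exact fun g => Subgroup.mem_comap.mp (hle (Subgroup.mem_top g))
  have h2 : ∀ g h : ThompsonF, Commute (π g) (π h) := by
    have hle : (⊤ : Subgroup ThompsonF) ≤
        Subgroup.comap π (Subgroup.centralizer (Set.range π)) := by
      rw [← hgen]
      refine (Subgroup.closure_le _).mpr ?_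
      rintro y (rfl | rfl) <;>
        · refine Subgroup.mem_comap.mpr (Subgroup.mem_centralizer_iff.mpr ?_)
          rintro z ⟨g, rfl⟩
          · have := Subgroup.mem_centralizer_iff.mp (h1 g)
            first
              | exact (this _ (Set.mem_insert _ _)).symm
              | exact (this _ (Set.mem_insert_of_mem _ rfl)).symm
    intro g h
    have hh := Subgroup.mem_centralizer_iff.mp (Subgroup.mem_comap.mp (hle (Subgroup.mem_top h)))
    exact hh (π g) ⟨g, rfl⟩
  rw [commutator_def]
  refine Subgroup.commutator_le.mpr fun g₁ _ g₂ _ => ?_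
  have hone : π ⁅g₁, g₂⁆ = 1 := by
    rw [map_commutatorElement]
    exact commutatorElement_eq_one_iff_commute.mpr (h2 g₁ g₂)
  exact MonoidHom.mem_ker.mpr hone

lemma commutator_le_of_d_mem {N : Subgroup ThompsonF} [N.Normal]
    (hd : (⁅bT, aT⁻¹⁆ : ThompsonF) ∈ N) : commutator ThompsonF ≤ N := by
  set π := QuotientGroup.mk' N with hπ
  have h0 : π ⁅bT, aT⁻¹⁆ = 1 := (QuotientGroup.eq_one_iff _).mpr hd
  rw [map_commutatorElement] at h0
  have h2 := commutatorElement_eq_one_iff_commute.mp h0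
  have h3 := h2.inv_right
  simp only [map_inv, inv_inv] at h3
  have hc : Commute (π aT) (π bT) := h3.symm
  have := commutator_le_ker π hc
  rwa [QuotientGroup.ker_mk'] at this



set_option maxHeartbeats 1000000

lemma zpow_two' {Q : Type*} [Group Q] (x : Q) : x ^ (2 : ℤ) = x * x := by
  rw [show (2 : ℤ) = 1 + 1 from rfl, zpow_add, zpow_one]

lemma zpow_three' {Q : Type*} [Group Q] (x : Q) : x ^ (3 : ℤ) = x * x * x := by
  rw [show (3 : ℤ) = 1 + 1 + 1 from rfl, zpow_add, zpow_add, zpow_one]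


lemma commutator_eq_commutator (H : Subgroup ThompsonF) [H.Normal]
    (hH : commutator ThompsonF ≤ H) : ⁅H, H⁆ = commutator ThompsonF := by
  refine le_antisymm (Subgroup.commutator_mono le_top le_top) ?_
  haveI hNn : (⁅H, H⁆ : Subgroup ThompsonF).Normal := Subgroup.commutator_normal H H
  set N : Subgroup ThompsonF := ⁅H, H⁆ with hN
  set π := QuotientGroup.mk' N with hπdef
  set A := π aT with hA
  set B := π bT with hB
  have hcomm : ∀ u v : ThompsonF, u ∈ commutator ThompsonF → v ∈ commutator ThompsonF →
      π u * π v = π v * π u := by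
    intro u v hu hv
    have h1 : π ⁅u, v⁆ = 1 := (QuotientGroup.eq_one_iff _).mpr
      (Subgroup.commutator_mem_commutator (hH hu) (hH hv))
    rw [map_commutatorElement] at h1
    exact (commutatorElement_eq_one_iff_commute.mp h1).eq
  have hq1 : ⁅A * B⁻¹, A⁻¹ * B * A⁆ = 1 := by
    have := congrArg π rel1
    simpa only [map_commutatorElement, map_mul, map_inv, map_one] using this
  have hq2 : ⁅A * B⁻¹, A⁻¹ ^ 2 * B * A ^ 2⁆ = 1 := by
    have := congrArg π rel2
    simpa only [map_commutatorElement, map_mul, map_inv, map_pow, map_one] using this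
  have e1 := S_one hq1
  rw [XX_one, XX_two] at e1
  have e2 := S_two hq2
  rw [XX_two, show XX A B 3 = A⁻¹ ^ 3 * B * A ^ 3 from rfl] at e2
  simp only [pow_succ, pow_zero, one_mul] at e1 e2
  have RelA : B⁻¹ * (B * A⁻¹ * B⁻¹ * A) * B
      = (B * A⁻¹ * B⁻¹ * A) * (A⁻¹ * (B * A⁻¹ * B⁻¹ * A) * A) := by
    have h2 : (A⁻¹ * A⁻¹ * B * (A * A))⁻¹ = B⁻¹ * (A⁻¹ * B * A)⁻¹ * B := by
      rw [← e1]; group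
    calc B⁻¹ * (B * A⁻¹ * B⁻¹ * A) * B = (A⁻¹ * B * A)⁻¹ * B := by group
      _ = B * (A⁻¹ * A⁻¹ * B * (A * A))⁻¹ := by rw [h2]; group; try simp only [zpow_two', zpow_three', mul_assoc]
      _ = (B * A⁻¹ * B⁻¹ * A) * (A⁻¹ * (B * A⁻¹ * B⁻¹ * A) * A) := by group; try simp only [zpow_two', zpow_three', mul_assoc]
  have RelB : B⁻¹ * (A⁻¹ * (B * A⁻¹ * B⁻¹ * A) * A) * B
      = A⁻¹ * (A⁻¹ * (B * A⁻¹ * B⁻¹ * A) * A) * A := by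
    calc B⁻¹ * (A⁻¹ * (B * A⁻¹ * B⁻¹ * A) * A) * B
        = (B⁻¹ * (A⁻¹ * B * A) * B) * (B⁻¹ * (A⁻¹ * A⁻¹ * B * (A * A)) * B)⁻¹ := by group; try simp only [zpow_two', zpow_three', mul_assoc]
      _ = (A⁻¹ * A⁻¹ * B * (A * A)) * (A⁻¹ * A⁻¹ * A⁻¹ * B * (A * A * A))⁻¹ := by rw [e1, e2]
      _ = A⁻¹ * (A⁻¹ * (B * A⁻¹ * B⁻¹ * A) * A) * A := by group; try simp only [zpow_two', zpow_three', mul_assoc]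
  have hw : (B * A * B⁻¹ * A⁻¹) * (B * A⁻¹ * B⁻¹ * A)
      = (B * A⁻¹ * B⁻¹ * A) * (B * A * B⁻¹ * A⁻¹) := by
    have hu : (⁅bT, aT⁆ : ThompsonF) ∈ commutator ThompsonF :=
      Subgroup.commutator_mem_commutator (Subgroup.mem_top _) (Subgroup.mem_top _)
    have hv : (⁅bT, aT⁻¹⁆ : ThompsonF) ∈ commutator ThompsonF :=
      Subgroup.commutator_mem_commutator (Subgroup.mem_top _) (Subgroup.mem_top _)
    have h3 := hcomm _ _ hu hv
    simpa only [map_commutatorElement, map_inv, commutatorElement_def, inv_inv, map_mul] using h3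
  have E : B⁻¹ * A⁻¹ * (B * A⁻¹ * B⁻¹ * A) * A * B
      = A⁻¹ * B⁻¹ * (B * A⁻¹ * B⁻¹ * A) * B * A := by
    calc B⁻¹ * A⁻¹ * (B * A⁻¹ * B⁻¹ * A) * A * B
        = B⁻¹ * A⁻¹ * (A * B * A⁻¹ * B⁻¹) *
            ((B * A * B⁻¹ * A⁻¹) * (B * A⁻¹ * B⁻¹ * A)) * A * B := by group
      _ = B⁻¹ * A⁻¹ * (A * B * A⁻¹ * B⁻¹) *
            ((B * A⁻¹ * B⁻¹ * A) * (B * A * B⁻¹ * A⁻¹)) * A * B := by rw [hw]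
      _ = A⁻¹ * B⁻¹ * (B * A⁻¹ * B⁻¹ * A) * B * A := by group
  have key : A⁻¹ * (A⁻¹ * (B * A⁻¹ * B⁻¹ * A) * A) * A
      = (A⁻¹ * (B * A⁻¹ * B⁻¹ * A) * A) * (A⁻¹ * (A⁻¹ * (B * A⁻¹ * B⁻¹ * A) * A) * A) := by
    calc A⁻¹ * (A⁻¹ * (B * A⁻¹ * B⁻¹ * A) * A) * A
        = B⁻¹ * (A⁻¹ * (B * A⁻¹ * B⁻¹ * A) * A) * B := RelB.symm
      _ = B⁻¹ * A⁻¹ * (B * A⁻¹ * B⁻¹ * A) * A * B := by group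
      _ = A⁻¹ * B⁻¹ * (B * A⁻¹ * B⁻¹ * A) * B * A := E
      _ = A⁻¹ * (B⁻¹ * (B * A⁻¹ * B⁻¹ * A) * B) * A := by group
      _ = A⁻¹ * ((B * A⁻¹ * B⁻¹ * A) * (A⁻¹ * (B * A⁻¹ * B⁻¹ * A) * A)) * A := by rw [RelA]
      _ = (A⁻¹ * (B * A⁻¹ * B⁻¹ * A) * A) *
            (A⁻¹ * (A⁻¹ * (B * A⁻¹ * B⁻¹ * A) * A) * A) := by group
  have hD2 : A⁻¹ * (B * A⁻¹ * B⁻¹ * A) * A = 1 := by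
    have h := key.symm
    have h1 : (A⁻¹ * (B * A⁻¹ * B⁻¹ * A) * A) * (A⁻¹ * (A⁻¹ * (B * A⁻¹ * B⁻¹ * A) * A) * A)
        = 1 * (A⁻¹ * (A⁻¹ * (B * A⁻¹ * B⁻¹ * A) * A) * A) := by rw [one_mul]; exact h
    exact mul_right_cancel h1
  have hDw : B * A⁻¹ * B⁻¹ * A = 1 := by
    have h : B * A⁻¹ * B⁻¹ * A = A * (A⁻¹ * (B * A⁻¹ * B⁻¹ * A) * A) * A⁻¹ := by group
    rw [h, hD2]
    group
  have hπd : π ⁅bT, aT⁻¹⁆ = 1 := by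
    have h : π ⁅bT, aT⁻¹⁆ = B * A⁻¹ * B⁻¹ * A := by
      rw [map_commutatorElement, commutatorElement_def, map_inv, inv_inv]
    rw [h, hDw]
  have hdN : (⁅bT, aT⁻¹⁆ : ThompsonF) ∈ N := (QuotientGroup.eq_one_iff _).mp hπd
  exact commutator_le_of_d_mem hdN

def genImage : Fin 2 → Multiplicative (ℤ × ℤ) :=
  ![Multiplicative.ofAdd (1, 0), Multiplicative.ofAdd (0, 1)]

lemma genImage_rels : ∀ r ∈ thompsonRels, FreeGroup.lift genImage r = 1 := by
  rintro r (rfl | rfl) <;>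
    · rw [map_commutatorElement]
      exact commutatorElement_eq_one_iff_commute.mpr (Commute.all _ _)

def φ : ThompsonF →* Multiplicative (ℤ × ℤ) := PresentedGroup.toGroup genImage_rels

lemma φ_a : φ aT = Multiplicative.ofAdd (1, 0) :=
  PresentedGroup.toGroup.of genImage_rels

lemma φ_b : φ bT = Multiplicative.ofAdd (0, 1) :=
  PresentedGroup.toGroup.of genImage_rels

lemma φ_surj : Function.Surjective φ := by
  intro p
  refine ⟨aT ^ (p.toAdd.1) * bT ^ (p.toAdd.2), ?_⟩
  rw [map_mul, map_zpow, map_zpow, φ_a, φ_b, ← ofAdd_zsmul, ← ofAdd_zsmul, ← ofAdd_add]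
  have h : p.toAdd.1 • ((1 : ℤ), (0 : ℤ)) + p.toAdd.2 • ((0 : ℤ), (1 : ℤ)) = p.toAdd := by
    simp [Prod.ext_iff]
  rw [h]
  simp

def ψ : Multiplicative (ℤ × ℤ) →* Abelianization ThompsonF where
  toFun p := Abelianization.of aT ^ p.toAdd.1 * Abelianization.of bT ^ p.toAdd.2
  map_one' := by simp
  map_mul' p q := by
    simp only [toAdd_mul, Prod.fst_add, Prod.snd_add, zpow_add]
    exact mul_mul_mul_comm _ _ _ _

lemma ψ_apply (p : Multiplicative (ℤ × ℤ)) :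
    ψ p = Abelianization.of aT ^ p.toAdd.1 * Abelianization.of bT ^ p.toAdd.2 := rfl

lemma ψφ : ∀ g : ThompsonF, ψ (φ g) = Abelianization.of g := by
  have h : Set.EqOn (ψ.comp φ) (Abelianization.of (G := ThompsonF)) {aT, bT} := by
    rintro y (rfl | rfl) <;>
      simp [MonoidHom.comp_apply, ψ_apply, φ_a, φ_b]
  have h2 := MonoidHom.eqOn_closure h
  intro g
  exact h2 (by rw [hgen]; exact Subgroup.mem_top g)

lemma ker_φ : φ.ker = commutator ThompsonF := by
  apply le_antisymm
  · intro g hg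
    have h1 : Abelianization.of g = 1 := by rw [← ψφ g, MonoidHom.mem_ker.mp hg, map_one]
    exact (QuotientGroup.eq_one_iff g).mp h1
  · exact commutator_le_ker φ (by rw [φ_a, φ_b]; exact Commute.all _ _)

lemma subgroup_z2_iso (L : Subgroup (Multiplicative (ℤ × ℤ))) (hL : L.index ≠ 0) :
    Nonempty (L ≃* Multiplicative (ℤ × ℤ)) := by
  let M : Submodule ℤ (ℤ × ℤ) :=
    { carrier := {x : ℤ × ℤ | Multiplicative.ofAdd x ∈ L}
      add_mem' := fun hx hy => by simpa [ofAdd_add] using mul_mem hx hy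
      zero_mem' := by simpa using one_mem L
      smul_mem' := fun c x hx => by
        simp only [Set.mem_setOf_eq] at hx ⊢
        rw [ofAdd_zsmul]
        exact zpow_mem hx c }
  have hmem : ∀ x : ℤ × ℤ, (L.index : ℤ) • x ∈ M := by
    intro x
    have h := Subgroup.pow_index_mem L (Multiplicative.ofAdd x)
    show Multiplicative.ofAdd ((L.index : ℤ) • x) ∈ L
    rw [ofAdd_zsmul]
    simpa [zpow_natCast] using h
  obtain ⟨n, bM⟩ := Submodule.basisOfPid (Module.Basis.finTwoProd ℤ) M
  have hrankM : (n : Cardinal) = Module.rank ℤ M := by simpa using bM.mk_eq_rank''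
  have hrank2 : (2 : Cardinal) = Module.rank ℤ (ℤ × ℤ) := by
    simpa using (Module.Basis.finTwoProd ℤ).mk_eq_rank''
  have hle : Module.rank ℤ M ≤ Module.rank ℤ (ℤ × ℤ) := Submodule.rank_le M
  have hLZ : ((L.index : ℤ)) ≠ 0 := by exact_mod_cast hL
  let f : (ℤ × ℤ) →ₗ[ℤ] M :=
    { toFun := fun x => ⟨(L.index : ℤ) • x, hmem x⟩
      map_add' := fun x y => by apply Subtype.ext; simp [smul_add]
      map_smul' := fun c x => by
        apply Subtype.ext
        show (L.index : ℤ) • (c • x) = c • ((L.index : ℤ) • x)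
        rw [smul_comm] }
  have hf : Function.Injective f := by
    intro x y hxy
    have h1 : (L.index : ℤ) • x = (L.index : ℤ) • y := congrArg Subtype.val hxy
    exact smul_right_injective _ hLZ h1
  have hge := f.rank_le_of_injective hf
  have hn : n = 2 := by
    have h1 : (n : Cardinal) ≤ (2 : Cardinal) := by rw [hrankM, hrank2]; exact hle
    have h2 : (2 : Cardinal) ≤ (n : Cardinal) := by rw [hrankM, hrank2]; exact hge
    have h1' : n ≤ 2 := by exact_mod_cast h1
    have h2' : 2 ≤ n := by exact_mod_cast h2
    omega
  subst hn
  let e : M ≃ₗ[ℤ] (ℤ × ℤ) := bM.equiv (Module.Basis.finTwoProd ℤ) (Equiv.refl _)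
  let e1 : L ≃* Multiplicative M :=
    { toFun := fun x => Multiplicative.ofAdd (⟨x.1.toAdd, x.2⟩ : M)
      invFun := fun m => ⟨Multiplicative.ofAdd m.toAdd.1, m.toAdd.2⟩
      left_inv := fun _ => rfl
      right_inv := fun _ => rfl
      map_mul' := fun _ _ => rfl }
  exact ⟨e1.trans (AddEquiv.toMultiplicative e.toAddEquiv)⟩

theorem main_thm :
    ∀ H : Subgroup ThompsonF, H.FiniteIndex →
      Nonempty (Abelianization H ≃* Multiplicative (ℤ × ℤ)) := by
  intro H hFI
  haveI := hFI
  have hcomm_le : commutator ThompsonF ≤ H := by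
    have h1 : commutator ThompsonF ≤ H.normalCore := by
      haveI : H.normalCore.Normal := H.normalCore_normal
      obtain ⟨m, hm⟩ := Nat.exists_eq_succ_of_ne_zero
        (Subgroup.FiniteIndex.index_ne_zero (H := H.normalCore))
      set π := QuotientGroup.mk' H.normalCore with hπ
      have hA : (π aT) ^ (m + 1) = 1 := by
        rw [← map_pow]
        refine (QuotientGroup.eq_one_iff _).mpr ?_
        have hp := Subgroup.pow_index_mem H.normalCore aT
        rwa [hm] at hp
      have hq1 : ⁅π aT * (π bT)⁻¹, (π aT)⁻¹ * π bT * π aT⁆ = 1 := by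
        have := congrArg π rel1
        simpa only [map_commutatorElement, map_mul, map_inv, map_one] using this
      have hq2 : ⁅π aT * (π bT)⁻¹, ((π aT)⁻¹) ^ 2 * π bT * (π aT) ^ 2⁆ = 1 := by
        have := congrArg π rel2
        simpa only [map_commutatorElement, map_mul, map_inv, map_pow, map_one] using this
      have hc := commute_of_pow_eq_one hq1 hq2 hA
      have h2 := commutator_le_ker π hc
      rwa [QuotientGroup.ker_mk'] at h2
    exact h1.trans H.normalCore_le
  haveI hHnormal : H.Normal := by
    constructor
    intro h hh g
    have h1 : ⁅g, h⁆ ∈ H := hcomm_le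
      (Subgroup.commutator_mem_commutator (Subgroup.mem_top _) (Subgroup.mem_top _))
    have h2 : g * h * g⁻¹ = ⁅g, h⁆ * h := by group
    rw [h2]
    exact H.mul_mem h1 hh
  have hHH : ⁅H, H⁆ = commutator ThompsonF := commutator_eq_commutator H hcomm_le
  have hker : (φ.comp H.subtype).ker = commutator ↥H := by
    rw [← MonoidHom.comap_ker, ker_φ, ← hHH]
    have hmap : Subgroup.map H.subtype (commutator ↥H) = ⁅H, H⁆ := by
      rw [_root_.commutator_def, Subgroup.map_commutator, ← MonoidHom.range_eq_map,
        Subgroup.range_subtype]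
    rw [← hmap, Subgroup.comap_map_eq_self_of_injective H.subtype_injective]
  have himNe : (Subgroup.map φ H).index ≠ 0 := by
    rw [Subgroup.index_map_eq (H := H) (f := φ) φ_surj (by rw [ker_φ]; exact hcomm_le)]
    exact Subgroup.FiniteIndex.index_ne_zero
  obtain ⟨eL⟩ := subgroup_z2_iso (Subgroup.map φ H) himNe
  have e1 : Abelianization ↥H ≃* (↥H ⧸ (φ.comp H.subtype).ker) :=
    QuotientGroup.quotientMulEquivOfEq hker.symm
  have e2 := QuotientGroup.quotientKerEquivRange (φ.comp H.subtype)
  have hrange : (φ.comp H.subtype).range = Subgroup.map φ H := by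
    rw [MonoidHom.range_comp, Subgroup.range_subtype]
  exact ⟨e1.trans (e2.trans ((MulEquiv.subgroupCongr hrange).trans eL))⟩

end ThompsonProof


/-- Every finite-index subgroup of Thompson's group `F` has abelianization `ℤ²`;
in particular the virtual first Betti number of `F` equals `2`. -/
theorem thompsonF_finiteIndex_abelianization :
    ∀ H : Subgroup ThompsonF, H.FiniteIndex →
      Nonempty (Abelianization H ≃* Multiplicative (ℤ × ℤ)) :=
  ThompsonProof.main_thm
end
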